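/- Let V : ℕ → (X → ℝ) be defined by the backward recursion V 0 x = indicator of U₀ x, and for k ≥ 1, V k x = 1 if x ∈ U_k and V k x = E[V (k-1) x' | x] (expectation over the transition kernel) if x ∉ U_k. Suppose B : X → ℕ → ℝ and constants β_i ≥ 0 satisfy: (i) B x i ≥ 0 for all x, i; (ii) B x i ≥ 1 for all x ∈ U_i and all i; (iii) E[B x' (i-1) | x] ≤ B x i + β_i for all x ∉ U_i and i ≥ 1. Then for all k and all x, V k x ≤ B x k + ∑_{i=1}^{k} β_i. -/
import Mathlib


open MeasureTheory
open scoped Classical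

/-- Induction core of the time-varying barrier bound (proof of Theorem 3):
the backward DP value function `V` (probability of hitting the time-indexed
unsafe sets within `k` steps) is bounded by the certificate plus accumulated
drift constants. -/
theorem timeVarying_barrier_induction
    {X : Type*} [MeasurableSpace X]
    (T : X → Measure X) (hT : ∀ x, IsProbabilityMeasure (T x))
    (U : ℕ → Set X) (hU : ∀ k, MeasurableSet (U k))
    (V : ℕ → X → ℝ)
    (hV0 : ∀ x, V 0 x = if x ∈ U 0 then 1 else 0)
    (hVu : ∀ k, 1 ≤ k → ∀ x ∈ U k, V k x = 1)
    (hVs : ∀ k, 1 ≤ k → ∀ x, x ∉ U k → V k x = ∫ y, V (k - 1) y ∂(T x))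
    (B : X → ℕ → ℝ) (β : ℕ → ℝ)
    (hβ : ∀ i, 0 ≤ β i)
    (hBmeas : ∀ i, Measurable fun x => B x i)
    (hBint : ∀ x i, Integrable (fun y => B y i) (T x))
    (hBnonneg : ∀ x i, 0 ≤ B x i)
    (hBunsafe : ∀ i, ∀ x ∈ U i, 1 ≤ B x i)
    (hdrift : ∀ i, 1 ≤ i → ∀ x, x ∉ U i →
      (∫ y, B y (i - 1) ∂(T x)) ≤ B x i + β i) :
    ∀ k x, V k x ≤ B x k + ∑ i ∈ Finset.Icc 1 k, β i := by
  have hVnn : ∀ k x, 0 ≤ V k x := by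
    intro k
    induction k with
    | zero => intro x; rw [hV0]; split <;> norm_num
    | succ k ih =>
      intro x
      by_cases h : x ∈ U (k + 1)
      · rw [hVu (k + 1) (by omega) x h]; norm_num
      · rw [hVs (k + 1) (by omega) x h]
        simpa using integral_nonneg ih
  intro k
  induction k with
  | zero =>
    intro x
    rw [hV0, show (∑ i ∈ Finset.Icc 1 0, β i) = 0 by simp, add_zero]
    by_cases h : x ∈ U 0
    · simp [h, hBunsafe 0 x h]
    · simp [h, hBnonneg x 0]
  | succ k ih =>
    intro x
    have hsum : ∑ i ∈ Finset.Icc 1 (k + 1), β i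
        = (∑ i ∈ Finset.Icc 1 k, β i) + β (k + 1) :=
      Finset.sum_Icc_succ_top (by omega) β
    have hsumnn : 0 ≤ ∑ i ∈ Finset.Icc 1 k, β i :=
      Finset.sum_nonneg fun i _ => hβ i
    by_cases h : x ∈ U (k + 1)
    · rw [hVu (k + 1) (by omega) x h, hsum]
      have := hBunsafe (k + 1) x h
      have := hβ (k + 1)
      linarith
    · rw [hVs (k + 1) (by omega) x h]
      simp only [Nat.add_sub_cancel]
      have hT' := hT x
      set C := ∑ i ∈ Finset.Icc 1 k, β i with hC
      have hintg : Integrable (fun y => B y k + C) (T x) :=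
        (hBint x k).add (integrable_const C)
      have h1 : (∫ y, V k y ∂(T x)) ≤ ∫ y, B y k + C ∂(T x) :=
        integral_mono_of_nonneg (Filter.Eventually.of_forall (hVnn k))
          hintg (Filter.Eventually.of_forall (ih))
      have h2 : (∫ y, B y k + C ∂(T x)) = (∫ y, B y k ∂(T x)) + C := by
        rw [integral_add (hBint x k) (integrable_const C), integral_const]
        simp
      have h3 : (∫ y, B y k ∂(T x)) ≤ B x (k + 1) + β (k + 1) := by
        simpa using hdrift (k + 1) (by omega) x h
      rw [hsum]
      linarith
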